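/- Let W_1, …, W_{N+1} be exchangeable real-valued random variables that are almost surely pairwise distinct, and define the conformal p-value p = (1 + Σ_{i=1}^{N} 1{W_i ≤ W_{N+1}})/(N+1). Then p is uniformly distributed on the set {1/(N+1), 2/(N+1), …, N/(N+1), 1}. -/

import Mathlib

open MeasureTheory

namespace ConformalAux

variable {N : ℕ}

/-- number of indices i with v i ≤ v j (counting j itself). -/
noncomputable def cnt (j : Fin (N + 1)) (v : Fin (N + 1) → ℝ) : ℕ :=
  (Finset.univ.filter fun i => v i ≤ v j).card

lemma measurable_cnt (j : Fin (N + 1)) : Measurable (cnt (N := N) j) := by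
  have h : cnt (N := N) j = fun v => ∑ i : Fin (N+1), if v i ≤ v j then 1 else 0 := by
    funext v; exact Finset.card_filter _ _
  rw [h]
  exact Finset.measurable_sum _ fun i _ =>
    Measurable.ite (measurableSet_le (measurable_pi_apply i) (measurable_pi_apply j))
      measurable_const measurable_const

lemma cnt_comp_perm (π : Equiv.Perm (Fin (N + 1))) (j : Fin (N + 1)) (v : Fin (N+1) → ℝ) :
    cnt j (v ∘ π) = cnt (π j) v := by
  unfold cnt
  apply Finset.card_bij (fun i _ => π i)
  · intro a ha; simp only [Finset.mem_filter, Finset.mem_univ, true_and] at ha ⊢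
    exact ha
  · intro a _ b _ h; exact π.injective h
  · intro b hb
    refine ⟨π.symm b, ?_, by simp⟩
    simp only [Finset.mem_filter, Finset.mem_univ, true_and] at hb ⊢
    simpa using hb

lemma one_le_cnt (j : Fin (N + 1)) (v : Fin (N+1) → ℝ) : 1 ≤ cnt j v :=
  Finset.card_pos.mpr ⟨j, by simp⟩

lemma cnt_le (j : Fin (N + 1)) (v : Fin (N+1) → ℝ) : cnt j v ≤ N + 1 := by
  exact (Finset.card_filter_le _ _).trans (by simp)

lemma cnt_lt_of_lt {j j' : Fin (N+1)} {v : Fin (N+1) → ℝ} (h : v j < v j') :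
    cnt j v < cnt j' v := by
  apply Finset.card_lt_card
  constructor
  · intro i hi
    simp only [Finset.mem_filter, Finset.mem_univ, true_and] at hi ⊢
    exact hi.trans h.le
  · intro hsub
    have := hsub (by simp : j' ∈ Finset.univ.filter fun i => v i ≤ v j')
    simp only [Finset.mem_filter, Finset.mem_univ, true_and] at this
    exact absurd (this.trans_lt h) (lt_irrefl _)

lemma cnt_injective {v : Fin (N+1) → ℝ} (hv : Function.Injective v) :
    Function.Injective fun j => cnt j v := by
  intro j j' h
  by_contra hne
  rcases lt_trichotomy (v j) (v j') with hlt | heq | hgt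
  · exact absurd h (cnt_lt_of_lt hlt).ne
  · exact hne (hv heq)
  · exact absurd h.symm (cnt_lt_of_lt hgt).ne

lemma exists_unique_cnt {v : Fin (N+1) → ℝ} (hv : Function.Injective v)
    {k : ℕ} (hk1 : 1 ≤ k) (hk2 : k ≤ N + 1) : ∃! j, cnt j v = k := by
  have himage : (Finset.univ.image fun j => cnt j v) = Finset.Icc 1 (N+1) := by
    apply Finset.eq_of_subset_of_card_le
    · intro m hm
      simp only [Finset.mem_image, Finset.mem_univ, true_and] at hm
      obtain ⟨j, rfl⟩ := hm
      exact Finset.mem_Icc.mpr ⟨one_le_cnt j v, cnt_le j v⟩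
    · rw [Finset.card_image_of_injective _ (cnt_injective hv)]
      simp [Nat.card_Icc]
  have : k ∈ Finset.univ.image fun j => cnt j v := by
    rw [himage]; exact Finset.mem_Icc.mpr ⟨hk1, hk2⟩
  simp only [Finset.mem_image, Finset.mem_univ, true_and] at this
  obtain ⟨j, hj⟩ := this
  exact ⟨j, hj, fun j' hj' => cnt_injective hv (hj'.trans hj.symm)⟩

lemma cnt_last_eq (v : Fin (N+1) → ℝ) :
    cnt (Fin.last N) v = 1 + Set.ncard {i : Fin N | v i.castSucc ≤ v (Fin.last N)} := by
  have hset : {i : Fin N | v i.castSucc ≤ v (Fin.last N)} =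
      ↑(Finset.univ.filter fun i : Fin N => v i.castSucc ≤ v (Fin.last N)) := by
    ext i; simp
  rw [hset, Set.ncard_coe_finset]
  unfold cnt
  rw [Fin.univ_castSuccEmb, Finset.filter_cons, if_pos le_rfl, Finset.card_cons,
    Finset.filter_map, Finset.card_map]
  rw [Nat.add_comm]
  rfl

end ConformalAux

open ConformalAux in
theorem conformal_pvalue_uniform
    {Ω : Type*} [MeasurableSpace Ω] (μ : Measure Ω) [IsProbabilityMeasure μ]
    (N : ℕ) (W : Ω → Fin (N + 1) → ℝ) (hW : Measurable W)
    (hexch : ∀ π : Equiv.Perm (Fin (N + 1)),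
      Measure.map (fun ω => W ω ∘ π) μ = Measure.map W μ)
    (hdistinct : ∀ᵐ ω ∂μ, Function.Injective (W ω))
    (p : Ω → ℝ)
    (hp : ∀ ω, p ω =
      (1 + (Set.ncard {i : Fin N | W ω i.castSucc ≤ W ω (Fin.last N)} : ℝ)) / (N + 1)) :
    ∀ k : ℕ, 1 ≤ k → k ≤ N + 1 →
      μ {ω | p ω = (k : ℝ) / (N + 1)} = 1 / (N + 1) := by
  intro k hk1 hk2
  set S : Set Ω := {ω | Function.Injective (W ω)} with hSdef
  have hS : MeasurableSet S := by
    have hSeq : S = ⋂ (i) (j), {ω | W ω i = W ω j → i = j} := by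
      ext ω
      simp only [hSdef, Set.mem_setOf_eq, Set.mem_iInter, Function.Injective]
    rw [hSeq]
    refine MeasurableSet.iInter fun i => MeasurableSet.iInter fun j => ?_
    by_cases hij : i = j
    · simp [hij]
    · have : {ω | W ω i = W ω j → i = j} = {ω | W ω i ≠ W ω j} := by
        ext ω; simp [hij]
      rw [this]
      exact (measurableSet_eq_fun ((measurable_pi_apply i).comp hW)
        ((measurable_pi_apply j).comp hW)).compl
  have hScompl : μ Sᶜ = 0 := by
    rw [hSdef, Set.compl_setOf]
    exact ae_iff.mp hdistinct
  have hSone : μ S = 1 := (prob_compl_eq_zero_iff hS).mp hScompl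
  -- the events
  set A : Fin (N+1) → Set Ω := fun j => {ω | cnt j (W ω) = k} with hAdef
  have hAmeas : ∀ j, MeasurableSet (A j) := fun j =>
    ((measurable_cnt j).comp hW) (measurableSet_singleton k)
  -- all A j have the same measure, by exchangeability
  have hAeq : ∀ j, μ (A j) = μ (A (Fin.last N)) := by
    intro j
    set π : Equiv.Perm (Fin (N+1)) := Equiv.swap j (Fin.last N) with hπ
    have hmeasπ : Measurable fun ω => W ω ∘ π :=
      measurable_pi_lambda _ fun i => (measurable_pi_apply (π i)).comp hW
    have hpre : A j = (fun ω => W ω ∘ π) ⁻¹' (cnt (Fin.last N) ⁻¹' {k}) := by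
      ext ω
      simp only [hAdef, Set.mem_setOf_eq, Set.mem_preimage, Set.mem_singleton_iff]
      rw [cnt_comp_perm π (Fin.last N) (W ω)]
      have hj : π (Fin.last N) = j := Equiv.swap_apply_right _ _
      rw [hj]
    have hpre' : A (Fin.last N) = W ⁻¹' (cnt (Fin.last N) ⁻¹' {k}) := rfl
    rw [hpre, hpre', ← Measure.map_apply hmeasπ ((measurable_cnt _) (measurableSet_singleton k)),
      ← Measure.map_apply hW ((measurable_cnt _) (measurableSet_singleton k)), hexch π]
  -- the restricted events partition S
  set B : Fin (N+1) → Set Ω := fun j => A j ∩ S with hBdef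
  have hBmeas : ∀ j, MeasurableSet (B j) := fun j => (hAmeas j).inter hS
  have hBdisj : Pairwise (Function.onFun Disjoint B) := by
    intro j j' hne
    rw [Function.onFun, Set.disjoint_left]
    rintro ω ⟨hj, hωS⟩ ⟨hj', -⟩
    exact hne (cnt_injective hωS (hj.trans hj'.symm))
  have hBcover : (⋃ j, B j) = S := by
    apply Set.Subset.antisymm
    · exact Set.iUnion_subset fun j => Set.inter_subset_right
    · intro ω hω
      obtain ⟨j, hj, -⟩ := exists_unique_cnt hω hk1 hk2
      exact Set.mem_iUnion.mpr ⟨j, hj, hω⟩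
  have hBA : ∀ j, μ (B j) = μ (A j) := by
    intro j
    refine le_antisymm (measure_mono Set.inter_subset_left) ?_
    calc μ (A j) ≤ μ (A j ∩ S) + μ (A j \ S) := measure_le_inter_add_diff μ _ _
    _ ≤ μ (B j) + μ Sᶜ := by
        gcongr
        exact Set.diff_subset_compl _ _
    _ = μ (B j) := by rw [hScompl, add_zero]
  have hsum : (↑(N + 1) : ENNReal) * μ (A (Fin.last N)) = 1 := by
    have h1 : μ (⋃ j, B j) = ∑' j, μ (B j) := measure_iUnion hBdisj hBmeas
    rw [hBcover, hSone, tsum_fintype] at h1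
    have h2 : ∀ j, μ (B j) = μ (A (Fin.last N)) := fun j => (hBA j).trans (hAeq j)
    rw [Finset.sum_congr rfl fun j _ => h2 j, Finset.sum_const, Finset.card_univ,
      Fintype.card_fin, nsmul_eq_mul] at h1
    exact h1.symm
  have hAlast : μ (A (Fin.last N)) = 1 / ((N : ENNReal) + 1) := by
    rw [ENNReal.eq_div_iff (by simp) (by simp)]
    push_cast at hsum
    convert hsum using 2
  -- identify the p-value event with A (last)
  have hsetEq : {ω | p ω = (k : ℝ) / (N + 1)} = A (Fin.last N) := by
    ext ω
    simp only [Set.mem_setOf_eq, hAdef, hp ω]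
    have hNe : ((N : ℝ) + 1) ≠ 0 := by positivity
    have hc := cnt_last_eq (W ω)
    rw [div_left_inj' hNe]
    constructor
    · intro h
      have h2 : ((cnt (Fin.last N) (W ω) : ℕ) : ℝ) = (k : ℝ) := by
        rw [hc]; push_cast; linarith
      exact_mod_cast h2
    · intro h
      rw [h] at hc
      have h2 : (k : ℝ) = 1 + ((Set.ncard {i : Fin N | W ω i.castSucc ≤ W ω (Fin.last N)}) : ℝ) := by
        exact_mod_cast hc
      rw [h2]
  rw [hsetEq, hAlast]
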